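/- Let φ₁(p) = 1/p − 1 with φ₁(0) = ∞ and inverse φ₁⁻¹(x) = 1/(x+1), φ₁⁻¹(∞) = 0. Then for all x, y ∈ (0,∞): φ₁(DT¹_∨(φ₁⁻¹(x), φ₁⁻¹(y))) = xy/(x + y) = 1/(1/x + 1/y); moreover the induced operation f satisfies f(0,0) = 0, f(x,∞) = x and f(∞,y) = y. That is, under the isomorphism φ₁, the Dombi T-conorm with λ = 1 corresponds exactly to the harmonic combination f(x,y) = xy/(x+y) of distances, which underlies the diffusion distance closure. -/

import Mathlib

open scoped ENNReal

/-- The proximity-to-distance map `φ₁ p = 1/p − 1`, with `φ₁ 0 = ∞`. -/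
noncomputable def phi1 (p : ℝ) : ℝ≥0∞ := if p = 0 then ⊤ else ENNReal.ofReal (1 / p - 1)

/-- The inverse map `φ₁⁻¹ x = 1/(x+1)`, with `φ₁⁻¹ ∞ = 0`. -/
noncomputable def psi1 (x : ℝ≥0∞) : ℝ := if x = ⊤ then 0 else 1 / (x.toReal + 1)

/-- The Dombi T-conorm with λ = 1: `DT¹_∨(a,b) = (a+b−2ab)/(1−ab)` for `(a,b) ≠ (1,1)`,
and `DT¹_∨(1,1) = 1`. -/
noncomputable def dombiTconorm (a b : ℝ) : ℝ :=
  if a = 1 ∧ b = 1 then 1 else (a + b - 2 * a * b) / (1 - a * b)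

/-- The induced distance operation `f x y = φ₁ (DT¹_∨ (φ₁⁻¹ x) (φ₁⁻¹ y))`. -/
noncomputable def diffOp (x y : ℝ≥0∞) : ℝ≥0∞ := phi1 (dombiTconorm (psi1 x) (psi1 y))

lemma psi1_top : psi1 ⊤ = 0 := by simp [psi1]

lemma dombi_a_zero (a : ℝ) : dombiTconorm a 0 = a := by
  simp [dombiTconorm]

lemma dombi_zero_b (b : ℝ) : dombiTconorm 0 b = b := by
  simp [dombiTconorm]

lemma phi1_psi1 (x : ℝ≥0∞) : phi1 (psi1 x) = x := by
  rcases eq_or_ne x ⊤ with h | h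
  · simp [psi1, phi1, h]
  · have ht : (0:ℝ) < x.toReal + 1 := by positivity
    have hne : 1 / (x.toReal + 1) ≠ 0 := by positivity
    simp only [psi1, if_neg h, phi1, if_neg hne]
    rw [one_div_one_div]
    simp [ENNReal.ofReal_toReal h]

lemma diffOp_top (x : ℝ≥0∞) : diffOp x ⊤ = x := by
  rw [diffOp, psi1_top, dombi_a_zero, phi1_psi1]

lemma diffOp_top' (y : ℝ≥0∞) : diffOp ⊤ y = y := by
  rw [diffOp, psi1_top, dombi_zero_b, phi1_psi1]

theorem stmt_16 :
    (∀ x y : ℝ≥0∞, x ≠ 0 → x ≠ ⊤ → y ≠ 0 → y ≠ ⊤ →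
      diffOp x y = x * y / (x + y) ∧ diffOp x y = (x⁻¹ + y⁻¹)⁻¹) ∧
    diffOp 0 0 = 0 ∧
    (∀ x : ℝ≥0∞, diffOp x ⊤ = x) ∧
    (∀ y : ℝ≥0∞, diffOp ⊤ y = y) := by
  refine ⟨?_, ?_, diffOp_top, diffOp_top'⟩
  · intro x y hx0 hxt hy0 hyt
    set s := x.toReal with hs'
    set t := y.toReal with ht'
    have hs : 0 < s := ENNReal.toReal_pos hx0 hxt
    have ht : 0 < t := ENNReal.toReal_pos hy0 hyt
    have hxs : x = ENNReal.ofReal s := (ENNReal.ofReal_toReal hxt).symm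
    have hyt' : y = ENNReal.ofReal t := (ENNReal.ofReal_toReal hyt).symm
    have hs1 : (0:ℝ) < s + 1 := by linarith
    have ht1 : (0:ℝ) < t + 1 := by linarith
    have hst : (0:ℝ) < s + t := by linarith
    have hstst : (0:ℝ) < s * t + s + t := by positivity
    -- compute dombiTconorm
    have hd : dombiTconorm (psi1 x) (psi1 y) = (s + t) / (s * t + s + t) := by
      have hax : psi1 x = 1 / (s + 1) := by simp [psi1, hxt]; rfl
      have hay : psi1 y = 1 / (t + 1) := by simp [psi1, hyt]; rfl
      have hne : ¬(1 / (s + 1) = 1 ∧ 1 / (t + 1) = 1) := by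
        rintro ⟨h1, _⟩
        rw [div_eq_one_iff_eq (by linarith)] at h1
        linarith
      rw [hax, hay, dombiTconorm, if_neg hne]
      rw [div_eq_div_iff, ] <;> [skip; skip; positivity]
      · field_simp
        ring
      · have : 1 - 1 / (s + 1) * (1 / (t + 1)) = (s * t + s + t) / ((s + 1) * (t + 1)) := by
          field_simp; ring
        rw [this]; positivity
    have hkey : diffOp x y = ENNReal.ofReal (s * t / (s + t)) := by
      rw [diffOp, hd, phi1, if_neg (by positivity)]
      congr 1
      rw [one_div_div]
      field_simp
      ring
    constructor
    · rw [hkey, hxs, hyt', ← ENNReal.ofReal_mul hs.le, ← ENNReal.ofReal_add hs.le ht.le]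
      exact ENNReal.ofReal_div_of_pos hst
    · rw [hkey, hxs, hyt', ← ENNReal.ofReal_inv_of_pos hs, ← ENNReal.ofReal_inv_of_pos ht,
        ← ENNReal.ofReal_add (by positivity) (by positivity),
        ← ENNReal.ofReal_inv_of_pos (by positivity)]
      congr 1
      field_simp
      ring
  · rw [diffOp]
    have : psi1 0 = 1 := by simp [psi1]
    rw [this, dombiTconorm]
    simp [phi1]
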